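/- Let Ω be an infinite set. Then every countable subset of the symmetric inverse semigroup I_Ω is contained in a 2-generated inverse subsemigroup of I_Ω; that is, for every countable set A of partial bijections of Ω there exist partial bijections f, g of Ω such that every element of A belongs to the subsemigroup of I_Ω generated by the four elements {f, g, f⁻¹, g⁻¹}, where f⁻¹ denotes the inverse partial bijection of f. -/

import Mathlib

/-- A partial function `Ω →. Ω` is a partial bijection if it is injective on its domain. -/
def IsPartialBij {Ω : Type*} (f : Ω →. Ω) : Prop :=
  ∀ ⦃x y z : Ω⦄, z ∈ f x → z ∈ f y → x = y

/-- The symmetric inverse semigroup `I_Ω`: the type of all partial bijections of `Ω`. -/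
def PartialBij (Ω : Type*) : Type _ :=
  {f : Ω →. Ω // IsPartialBij f}

/-- Composition of partial bijections, written left-to-right: `f * g` means apply `f` first,
then `g`. -/
instance (Ω : Type*) : Semigroup (PartialBij Ω) where
  mul f g := ⟨g.1.comp f.1, by
    intro x y z hx hy
    simp only [PFun.comp_apply] at hx hy
    obtain ⟨u, hu, hzu⟩ := Part.mem_bind_iff.1 hx
    obtain ⟨v, hv, hzv⟩ := Part.mem_bind_iff.1 hy
    have huv : u = v := g.2 hzu hzv
    subst huv
    exact f.2 hu hv⟩
  mul_assoc a b c := Subtype.ext (PFun.comp_assoc c.1 b.1 a.1).symm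

/-- The inverse of a partial bijection: its domain is the range of `f`, and it sends each
point of the range of `f` back to its unique preimage. -/
noncomputable def PartialBij.inv {Ω : Type*} (f : PartialBij Ω) : PartialBij Ω :=
  ⟨fun y => ⟨∃ x, y ∈ f.1 x, fun h => Classical.choose h⟩, by
    intro y₁ y₂ z hz₁ hz₂
    obtain ⟨h₁, hz₁⟩ := hz₁
    obtain ⟨h₂, hz₂⟩ := hz₂
    have hy₁ : y₁ ∈ f.1 z := hz₁ ▸ Classical.choose_spec h₁
    have hy₂ : y₂ ∈ f.1 z := hz₂ ▸ Classical.choose_spec h₂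
    exact Part.mem_unique hy₁ hy₂⟩

namespace TwoGenAux

variable {Ω : Type*}

lemma mem_mul_iff (p q : PartialBij Ω) (x z : Ω) :
    z ∈ (p * q).1 x ↔ ∃ y, y ∈ p.1 x ∧ z ∈ q.1 y := by
  show z ∈ (q.1.comp p.1) x ↔ _
  simp only [PFun.comp_apply]
  exact Part.mem_bind_iff

lemma mem_inv_iff (p : PartialBij Ω) (y z : Ω) : z ∈ (PartialBij.inv p).1 y ↔ y ∈ p.1 z := by
  constructor
  · rintro ⟨h, rfl⟩
    exact Classical.choose_spec h
  · intro hz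
    have h : ∃ x, y ∈ p.1 x := ⟨z, hz⟩
    exact ⟨h, p.2 (Classical.choose_spec h) hz⟩

/-- The identity, used for the trivial (empty) case. -/
def idP : PartialBij Ω :=
  ⟨fun x => Part.some x, by
    intro x y z hx hy
    rw [Part.mem_some_iff] at hx hy
    rw [← hx, hy]⟩

variable (e : Ω × ℕ ≃ Ω) (a : ℕ → PartialBij Ω)

lemma e_pair_inj {x y : Ω} {m n : ℕ} (h : e (x, m) = e (y, n)) : x = y ∧ m = n := by
  have h2 := e.injective h
  exact ⟨congrArg Prod.fst h2, congrArg Prod.snd h2⟩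

/-- The encoder `y ↦ ⟨y, 0⟩`. -/
def fP : PartialBij Ω :=
  ⟨fun y => Part.some (e (y, 0)), by
    intro x y z hx hy
    rw [Part.mem_some_iff] at hx hy
    exact (e_pair_inj e (hx ▸ hy)).1⟩

/-- The underlying partial function of the second generator. -/
def gFun : Ω →. Ω := fun y =>
  match e.symm y with
  | (z, m+1) => Part.some (e (z, m+2))
  | (z, 0) =>
    match e.symm z with
    | (x, 0) => Part.some (e (x, 1))
    | (x, j+1) => ((a j).1 x).map (fun w => e (e (w, j+1), 0))

lemma mem_gFun_iff (y u : Ω) :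
    u ∈ gFun e a y ↔
      (∃ z m, y = e (z, m+1) ∧ u = e (z, m+2)) ∨
      (∃ x, y = e (e (x, 0), 0) ∧ u = e (x, 1)) ∨
      (∃ x j w, w ∈ (a j).1 x ∧ y = e (e (x, j+1), 0) ∧ u = e (e (w, j+1), 0)) := by
  obtain ⟨⟨z, m⟩, rfl⟩ : ∃ p : Ω × ℕ, y = e p := ⟨e.symm y, (e.apply_symm_apply y).symm⟩
  rcases m with _ | m
  · obtain ⟨⟨x, k⟩, rfl⟩ : ∃ p : Ω × ℕ, z = e p := ⟨e.symm z, (e.apply_symm_apply z).symm⟩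
    rcases k with _ | j
    · have hg : gFun e a (e (e (x, 0), 0)) = Part.some (e (x, 1)) := by
        simp [gFun, Equiv.symm_apply_apply]
      rw [hg, Part.mem_some_iff]
      constructor
      · intro h
        exact Or.inr (Or.inl ⟨x, rfl, h⟩)
      · rintro (⟨z', m', hy, hu⟩ | ⟨x', hy, hu⟩ | ⟨x', j', w', hw', hy, hu⟩)
        · exact absurd (e_pair_inj e hy).2 (by omega)
        · obtain ⟨h1, -⟩ := e_pair_inj e hy
          obtain ⟨h2, -⟩ := e_pair_inj e h1
          rw [hu, h2]
        · obtain ⟨h1, -⟩ := e_pair_inj e hy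
          exact absurd (e_pair_inj e h1).2 (by omega)
    · have hg : gFun e a (e (e (x, j+1), 0)) =
          ((a j).1 x).map (fun w => e (e (w, j+1), 0)) := by
        simp [gFun, Equiv.symm_apply_apply]
      rw [hg, Part.mem_map_iff]
      constructor
      · rintro ⟨w, hw, rfl⟩
        exact Or.inr (Or.inr ⟨x, j, w, hw, rfl, rfl⟩)
      · rintro (⟨z', m', hy, hu⟩ | ⟨x', hy, hu⟩ | ⟨x', j', w', hw', hy, hu⟩)
        · exact absurd (e_pair_inj e hy).2 (by omega)
        · obtain ⟨h1, -⟩ := e_pair_inj e hy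
          exact absurd (e_pair_inj e h1).2 (by omega)
        · obtain ⟨h1, -⟩ := e_pair_inj e hy
          obtain ⟨h2, h3⟩ := e_pair_inj e h1
          have hj : j' = j := by omega
          subst h2
          subst hj
          exact ⟨w', hw', hu.symm⟩
  · have hg : gFun e a (e (z, m+1)) = Part.some (e (z, m+2)) := by
      simp [gFun, Equiv.symm_apply_apply]
    rw [hg, Part.mem_some_iff]
    constructor
    · intro h
      exact Or.inl ⟨z, m, rfl, h⟩
    · rintro (⟨z', m', hy, hu⟩ | ⟨x', hy, hu⟩ | ⟨x', j', w', hw', hy, hu⟩)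
      · obtain ⟨h1, h2⟩ := e_pair_inj e hy
        have hm : m' = m := by omega
        subst h1
        subst hm
        exact hu
      · exact absurd (e_pair_inj e hy).2 (by omega)
      · exact absurd (e_pair_inj e hy).2 (by omega)

lemma gFun_isPartialBij : IsPartialBij (gFun e a) := by
  intro y₁ y₂ u h1 h2
  rw [mem_gFun_iff] at h1 h2
  rcases h1 with ⟨z, m, rfl, rfl⟩ | ⟨x, rfl, rfl⟩ | ⟨x, j, w, hw, rfl, rfl⟩ <;>
    rcases h2 with ⟨z', m', hy, hu⟩ | ⟨x', hy, hu⟩ | ⟨x', j', w', hw', hy, hu⟩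
  · obtain ⟨hz, hm⟩ := e_pair_inj e hu
    have hm' : m = m' := by omega
    rw [hy, ← hz, ← hm']
  · exact absurd (e_pair_inj e hu).2 (by omega)
  · exact absurd (e_pair_inj e hu).2 (by omega)
  · exact absurd (e_pair_inj e hu).2 (by omega)
  · obtain ⟨h1, -⟩ := e_pair_inj e hu
    rw [hy, h1]
  · exact absurd (e_pair_inj e hu).2 (by omega)
  · exact absurd (e_pair_inj e hu).2 (by omega)
  · exact absurd (e_pair_inj e hu).2 (by omega)
  · obtain ⟨h1, -⟩ := e_pair_inj e hu
    obtain ⟨h2, h3⟩ := e_pair_inj e h1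
    have hj : j' = j := by omega
    rw [hj] at hw'
    rw [← h2] at hw'
    have hx : x = x' := (a j).2 hw hw'
    rw [hy, ← hx, hj]

/-- The second generator. -/
noncomputable def gP : PartialBij Ω := ⟨gFun e a, gFun_isPartialBij e a⟩

lemma mem_fP_iff (y u : Ω) : u ∈ (fP e).1 y ↔ u = e (y, 0) := Part.mem_some_iff

lemma mem_gP_iff (y u : Ω) :
    u ∈ (gP e a).1 y ↔
      (∃ z m, y = e (z, m+1) ∧ u = e (z, m+2)) ∨
      (∃ x, y = e (e (x, 0), 0) ∧ u = e (x, 1)) ∨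
      (∃ x j w, w ∈ (a j).1 x ∧ y = e (e (x, j+1), 0) ∧ u = e (e (w, j+1), 0)) :=
  mem_gFun_iff e a y u

/-- The conjugating words realising `a n` at level `n`. -/
noncomputable def EP : ℕ → PartialBij Ω
  | 0 => fP e * gP e a * (fP e).inv
  | n+1 => gP e a * EP n * (gP e a).inv

lemma mem_EP_iff : ∀ (n j : ℕ) (x u : Ω),
    u ∈ (EP e a n).1 (e (x, j+1)) ↔ ∃ w, w ∈ (a (n+j)).1 x ∧ u = e (w, j+1) := by
  intro n
  induction n with
  | zero =>
    intro j x u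
    show u ∈ ((fP e * gP e a) * (fP e).inv).1 _ ↔ _
    rw [mem_mul_iff]
    constructor
    · rintro ⟨y2, hy2, hu⟩
      rw [mem_mul_iff] at hy2
      obtain ⟨y1, hy1, hy2⟩ := hy2
      rw [mem_fP_iff] at hy1
      subst hy1
      rw [mem_gP_iff] at hy2
      rcases hy2 with ⟨z', m', hy, hu'⟩ | ⟨x', hy, hu'⟩ | ⟨x', j', w', hw', hy, hu'⟩
      · exact absurd (e_pair_inj e hy).2 (by omega)
      · obtain ⟨h1, -⟩ := e_pair_inj e hy
        exact absurd (e_pair_inj e h1).2 (by omega)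
      · obtain ⟨h1, -⟩ := e_pair_inj e hy
        obtain ⟨h2, h3⟩ := e_pair_inj e h1
        have hj : j' = j := by omega
        rw [hj] at hw' hu'
        rw [← h2] at hw'
        rw [mem_inv_iff, mem_fP_iff] at hu
        rw [hu] at hu'
        obtain ⟨h4, -⟩ := e_pair_inj e hu'
        exact ⟨w', by rw [Nat.zero_add]; exact hw', h4⟩
    · rintro ⟨w, hw, rfl⟩
      rw [Nat.zero_add] at hw
      refine ⟨e (e (w, j+1), 0), ?_, ?_⟩
      · rw [mem_mul_iff]
        refine ⟨e (e (x, j+1), 0), (mem_fP_iff e _ _).2 rfl, ?_⟩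
        rw [mem_gP_iff]
        exact Or.inr (Or.inr ⟨x, j, w, hw, rfl, rfl⟩)
      · rw [mem_inv_iff, mem_fP_iff]
  | succ n ih =>
    intro j x u
    show u ∈ ((gP e a * EP e a n) * (gP e a).inv).1 _ ↔ _
    rw [mem_mul_iff]
    constructor
    · rintro ⟨y2, hy2, hu⟩
      rw [mem_mul_iff] at hy2
      obtain ⟨y1, hy1, hy2⟩ := hy2
      rw [mem_gP_iff] at hy1
      rcases hy1 with ⟨z', m', hy, rfl⟩ | ⟨x', hy, hu'⟩ | ⟨x', j', w', hw', hy, hu'⟩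
      · obtain ⟨h1, h2⟩ := e_pair_inj e hy
        have hm : m' = j := by omega
        subst h1
        rw [hm] at hy2
        rw [show j + 2 = (j+1)+1 by omega, ih (j+1) x y2] at hy2
        obtain ⟨w, hw, rfl⟩ := hy2
        rw [mem_inv_iff, mem_gP_iff] at hu
        rcases hu with ⟨z'', m'', hy', hu'⟩ | ⟨x'', hy', hu'⟩ | ⟨x'', j'', w'', hw'', hy', hu'⟩
        · obtain ⟨h3, h4⟩ := e_pair_inj e hu'
          have hm'' : m'' = j := by omega
          refine ⟨w, by rw [show n + 1 + j = n + (j+1) by omega]; exact hw, ?_⟩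
          rw [hy', ← h3, hm'']
        · exact absurd (e_pair_inj e hu').2 (by omega)
        · exact absurd (e_pair_inj e hu').2 (by omega)
      · exact absurd (e_pair_inj e hy).2 (by omega)
      · exact absurd (e_pair_inj e hy).2 (by omega)
    · rintro ⟨w, hw, rfl⟩
      refine ⟨e (w, j+2), ?_, ?_⟩
      · rw [mem_mul_iff]
        refine ⟨e (x, j+2), ?_, ?_⟩
        · rw [mem_gP_iff]
          exact Or.inl ⟨x, j, rfl, rfl⟩
        · rw [show j + 2 = (j+1)+1 from rfl, ih (j+1) x]
          exact ⟨w, by rwa [show n + (j+1) = n + 1 + j by omega], rfl⟩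
      · rw [mem_inv_iff, mem_gP_iff]
        exact Or.inl ⟨w, j, rfl, rfl⟩

/-- The full word realising `a n`. -/
noncomputable def wordP (n : ℕ) : PartialBij Ω :=
  (fP e * fP e * gP e a) * EP e a n * ((gP e a).inv * (fP e).inv * (fP e).inv)

lemma mem_entry_iff (x u : Ω) : u ∈ (fP e * fP e * gP e a).1 x ↔ u = e (x, 1) := by
  show u ∈ ((fP e * fP e) * gP e a).1 x ↔ _
  rw [mem_mul_iff]
  constructor
  · rintro ⟨y, hy, hu⟩
    rw [mem_mul_iff] at hy
    obtain ⟨y1, hy1, hy⟩ := hy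
    rw [mem_fP_iff] at hy1 hy
    subst hy1; subst hy
    rw [mem_gP_iff] at hu
    rcases hu with ⟨z', m', hy, hu⟩ | ⟨x', hy, hu⟩ | ⟨x', j', w', hw', hy, hu⟩
    · exact absurd (e_pair_inj e hy).2 (by omega)
    · obtain ⟨h1, -⟩ := e_pair_inj e hy
      obtain ⟨h2, -⟩ := e_pair_inj e h1
      rw [hu, h2]
    · obtain ⟨h1, -⟩ := e_pair_inj e hy
      exact absurd (e_pair_inj e h1).2 (by omega)
  · rintro rfl
    refine ⟨e (e (x, 0), 0), ?_, ?_⟩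
    · rw [mem_mul_iff]
      exact ⟨e (x, 0), (mem_fP_iff e _ _).2 rfl, (mem_fP_iff e _ _).2 rfl⟩
    · rw [mem_gP_iff]
      exact Or.inr (Or.inl ⟨x, rfl, rfl⟩)

lemma mem_exit_iff (y z : Ω) :
    z ∈ ((gP e a).inv * (fP e).inv * (fP e).inv).1 y ↔ y = e (z, 1) := by
  show z ∈ (((gP e a).inv * (fP e).inv) * (fP e).inv).1 y ↔ _
  rw [mem_mul_iff]
  constructor
  · rintro ⟨v, hv, hz⟩
    rw [mem_mul_iff] at hv
    obtain ⟨u, hu, hv⟩ := hv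
    rw [mem_inv_iff, mem_fP_iff] at hv hz
    rw [mem_inv_iff, mem_gP_iff] at hu
    rcases hu with ⟨z', m', hu1, hu2⟩ | ⟨x', hu1, hu2⟩ | ⟨x', j', w', hw', hu1, hu2⟩
    · rw [hv] at hu1
      exact absurd (e_pair_inj e hu1).2 (by omega)
    · rw [hv, hz] at hu1
      obtain ⟨h1, -⟩ := e_pair_inj e hu1
      obtain ⟨h2, -⟩ := e_pair_inj e h1
      rw [hu2, ← h2]
    · rw [hv, hz] at hu1
      obtain ⟨h1, -⟩ := e_pair_inj e hu1
      exact absurd (e_pair_inj e h1).2 (by omega)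
  · rintro rfl
    refine ⟨e (z, 0), ?_, (mem_inv_iff _ _ _).2 ((mem_fP_iff e _ _).2 rfl)⟩
    rw [mem_mul_iff]
    refine ⟨e (e (z, 0), 0), ?_, (mem_inv_iff _ _ _).2 ((mem_fP_iff e _ _).2 rfl)⟩
    rw [mem_inv_iff, mem_gP_iff]
    exact Or.inr (Or.inl ⟨z, rfl, rfl⟩)

lemma wordP_eq (n : ℕ) : wordP e a n = a n := by
  apply Subtype.ext
  funext x
  apply Part.ext
  intro z
  show z ∈ (((fP e * fP e * gP e a) * EP e a n) * ((gP e a).inv * (fP e).inv * (fP e).inv)).1 x ↔ _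
  rw [mem_mul_iff]
  constructor
  · rintro ⟨y2, hy2, hz⟩
    rw [mem_mul_iff] at hy2
    obtain ⟨y1, hy1, hy2⟩ := hy2
    rw [mem_entry_iff] at hy1
    subst hy1
    rw [mem_exit_iff] at hz
    subst hz
    rw [show (1 : ℕ) = 0 + 1 from rfl, mem_EP_iff] at hy2
    obtain ⟨w, hw, hww⟩ := hy2
    obtain ⟨h1, -⟩ := e_pair_inj e hww
    rw [h1]
    rwa [Nat.add_zero] at hw
  · intro hz
    refine ⟨e (z, 1), ?_, (mem_exit_iff e a _ _).2 rfl⟩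
    rw [mem_mul_iff]
    refine ⟨e (x, 1), (mem_entry_iff e a _ _).2 rfl, ?_⟩
    rw [show (1 : ℕ) = 0 + 1 from rfl, mem_EP_iff]
    exact ⟨z, by rwa [Nat.add_zero], rfl⟩

lemma wordP_mem_closure (n : ℕ) :
    wordP e a n ∈ Subsemigroup.closure {fP e, gP e a, (fP e).inv, (gP e a).inv} := by
  have hf : fP e ∈ Subsemigroup.closure {fP e, gP e a, (fP e).inv, (gP e a).inv} :=
    Subsemigroup.subset_closure (by simp)
  have hg : gP e a ∈ Subsemigroup.closure {fP e, gP e a, (fP e).inv, (gP e a).inv} :=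
    Subsemigroup.subset_closure (by simp)
  have hfi : (fP e).inv ∈ Subsemigroup.closure {fP e, gP e a, (fP e).inv, (gP e a).inv} :=
    Subsemigroup.subset_closure (by simp)
  have hgi : (gP e a).inv ∈ Subsemigroup.closure {fP e, gP e a, (fP e).inv, (gP e a).inv} :=
    Subsemigroup.subset_closure (by simp)
  have hE : ∀ m, EP e a m ∈ Subsemigroup.closure {fP e, gP e a, (fP e).inv, (gP e a).inv} := by
    intro m
    induction m with
    | zero => exact mul_mem (mul_mem hf hg) hfi
    | succ m ih => exact mul_mem (mul_mem hg ih) hgi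
  exact mul_mem (mul_mem (mul_mem (mul_mem hf hf) hg) (hE n)) (mul_mem (mul_mem hgi hfi) hfi)

end TwoGenAux

/-- Every countable subset of the symmetric inverse semigroup `I_Ω` on an infinite set `Ω`
is contained in a 2-generated *inverse* subsemigroup of `I_Ω`, i.e. in the subsemigroup
generated by two partial bijections together with their inverses. -/
theorem countable_subset_of_two_generated_inverse_subsemigroup_of_partialBij
    (Ω : Type*) [Infinite Ω] (A : Set (PartialBij Ω)) (hA : A.Countable) :
    ∃ f g : PartialBij Ω,
      A ⊆ (Subsemigroup.closure {f, g, f.inv, g.inv} : Subsemigroup (PartialBij Ω)) := by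
  rcases A.eq_empty_or_nonempty with rfl | hne
  · exact ⟨TwoGenAux.idP, TwoGenAux.idP, by simp⟩
  · obtain ⟨e⟩ : Nonempty (Ω × ℕ ≃ Ω) := by
      rw [← Cardinal.eq, Cardinal.mk_prod, Cardinal.lift_uzero, Cardinal.mk_nat,
        Cardinal.lift_aleph0, Cardinal.mk_mul_aleph0_eq]
    obtain ⟨a, rfl⟩ := hA.exists_eq_range hne
    refine ⟨TwoGenAux.fP e, TwoGenAux.gP e a, ?_⟩
    rintro x ⟨n, rfl⟩
    rw [← TwoGenAux.wordP_eq e a n]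
    exact TwoGenAux.wordP_mem_closure e a n
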